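/- arXiv:1307.7408 — 3 statements merged into one kernel-verified Lean document; each statement's English description precedes it below -/
import Mathlib

section
/- Let A_c* be the main operator of the dual functional-model system node, acting on the dual de Branges–Rovnyak space H_c: dom(A_c*) = {x ∈ H_c : ∃ u ∈ U such that μ ↦ μ x(μ) − u ∈ H_c}, with (A_c* x)(μ) = μ x(μ) − lim_{Re η → ∞} η x(η). Then for every α ∈ ℂ⁺ the resolvent of A_c* is given by ((conj α − A_c*)⁻¹ x)(μ) = (x(μ) − x(conj α))/(conj α − μ) for all x ∈ H_c and μ ∈ ℂ⁺ (with the removable singularity at μ = conj α filled in by holomorphic continuation). -/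
open Filter

section aux
variable {U Y Hc : Type*}
  [NormedAddCommGroup U] [InnerProductSpace ℂ U] [CompleteSpace U]
  [NormedAddCommGroup Y] [InnerProductSpace ℂ Y] [CompleteSpace Y]
  [NormedAddCommGroup Hc] [InnerProductSpace ℂ Hc] [CompleteSpace Hc]

local notation "⟪" x ", " y "⟫" => @inner ℂ _ _ x y

lemma kc_smul (vc : Hc →ₗ[ℂ] (ℂ → U)) (kc : ℂ → U → Hc)
    (hrep : ∀ (f : Hc) (l : ℂ), 0 < l.re → ∀ u : U,
      (inner ℂ (kc l u) f : ℂ) = inner ℂ u (vc f l))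
    {l : ℂ} (hl : 0 < l.re) (c : ℂ) (u : U) : kc l (c • u) = c • kc l u := by
  have h : ∀ f : Hc, ⟪kc l (c • u) - c • kc l u, f⟫ = 0 := by
    intro f
    rw [inner_sub_left, inner_smul_left, hrep _ _ hl, hrep _ _ hl, inner_smul_left]
    ring
  have h2 := h (kc l (c • u) - c • kc l u)
  rw [inner_self_eq_zero, sub_eq_zero] at h2
  exact h2

lemma kc_sub (vc : Hc →ₗ[ℂ] (ℂ → U)) (kc : ℂ → U → Hc)
    (hrep : ∀ (f : Hc) (l : ℂ), 0 < l.re → ∀ u : U,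
      (inner ℂ (kc l u) f : ℂ) = inner ℂ u (vc f l))
    {l : ℂ} (hl : 0 < l.re) (u v : U) : kc l (u - v) = kc l u - kc l v := by
  have h : ∀ f : Hc, ⟪kc l (u - v) - (kc l u - kc l v), f⟫ = 0 := by
    intro f
    rw [inner_sub_left, inner_sub_left, hrep _ _ hl, hrep _ _ hl, hrep _ _ hl,
      inner_sub_left]
    ring
  have h2 := h (kc l (u - v) - (kc l u - kc l v))
  rw [inner_self_eq_zero, sub_eq_zero] at h2
  exact h2


lemma diss_identity (φ : ℂ → (U →L[ℂ] Y)) (vc : Hc →ₗ[ℂ] (ℂ → U)) (kc : ℂ → U → Hc)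
    (hrep : ∀ (f : Hc) (l : ℂ), 0 < l.re → ∀ u : U,
      (inner ℂ (kc l u) f : ℂ) = inner ℂ u (vc f l))
    (hker : ∀ m l : ℂ, 0 < m.re → 0 < l.re → ∀ u : U,
      vc (kc l u) m = ((m + (starRingEnd ℂ) l)⁻¹ : ℂ)
        • (u - ContinuousLinearMap.adjoint (φ ((starRingEnd ℂ) m))
            (φ ((starRingEnd ℂ) l) u)))
    {ι : Type*} (s : Finset ι) (q : ι → ℂ) (g : ι → U) (hq : ∀ i ∈ s, 0 < (q i).re) :
    (⟪∑ i ∈ s, kc (q i) ((starRingEnd ℂ) (q i) • g i), ∑ i ∈ s, kc (q i) (g i)⟫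
      + ⟪∑ i ∈ s, kc (q i) (g i), ∑ i ∈ s, kc (q i) ((starRingEnd ℂ) (q i) • g i)⟫)
    = ⟪∑ i ∈ s, g i, ∑ i ∈ s, g i⟫
      - ⟪∑ i ∈ s, φ ((starRingEnd ℂ) (q i)) (g i),
          ∑ i ∈ s, φ ((starRingEnd ℂ) (q i)) (g i)⟫ := by
  have main : ∀ i ∈ s, ∀ j ∈ s,
      (⟪kc (q i) ((starRingEnd ℂ) (q i) • g i), kc (q j) (g j)⟫
        + ⟪kc (q i) (g i), kc (q j) ((starRingEnd ℂ) (q j) • g j)⟫ : ℂ)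
      = ⟪g i, g j⟫ - ⟪φ ((starRingEnd ℂ) (q i)) (g i), φ ((starRingEnd ℂ) (q j)) (g j)⟫ := by
    intro i hi j hj
    have hij : q i + (starRingEnd ℂ) (q j) ≠ 0 := by
      intro h
      have : (q i + (starRingEnd ℂ) (q j)).re = 0 := by rw [h]; simp
      rw [Complex.add_re, Complex.conj_re] at this
      have := hq i hi; have := hq j hj
      linarith
    have e1 : (⟪g i, g j - ContinuousLinearMap.adjoint (φ ((starRingEnd ℂ) (q i)))
        (φ ((starRingEnd ℂ) (q j)) (g j))⟫ : ℂ)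
        = ⟪g i, g j⟫ - ⟪φ ((starRingEnd ℂ) (q i)) (g i), φ ((starRingEnd ℂ) (q j)) (g j)⟫ := by
      rw [inner_sub_right, ContinuousLinearMap.adjoint_inner_right]
    rw [hrep _ _ (hq i hi), hrep _ _ (hq i hi), hker _ _ (hq i hi) (hq j hj),
      hker _ _ (hq i hi) (hq j hj)]
    simp only [map_smul, ← smul_sub, inner_smul_right, inner_smul_left, Complex.conj_conj]
    rw [e1]
    field_simp
  have lhs : (⟪∑ i ∈ s, kc (q i) ((starRingEnd ℂ) (q i) • g i), ∑ i ∈ s, kc (q i) (g i)⟫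
      + ⟪∑ i ∈ s, kc (q i) (g i), ∑ i ∈ s, kc (q i) ((starRingEnd ℂ) (q i) • g i)⟫ : ℂ)
      = ∑ i ∈ s, ∑ j ∈ s,
        (⟪g i, g j⟫ - ⟪φ ((starRingEnd ℂ) (q i)) (g i), φ ((starRingEnd ℂ) (q j)) (g j)⟫) := by
    rw [sum_inner, sum_inner, ← Finset.sum_add_distrib]
    refine Finset.sum_congr rfl fun i hi => ?_
    rw [inner_sum, inner_sum, ← Finset.sum_add_distrib]
    exact Finset.sum_congr rfl fun j hj => main i hi j hj
  rw [lhs]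
  simp only [sum_inner, inner_sum, Finset.sum_sub_distrib]
  congr 1 <;> exact Finset.sum_comm


lemma resolvent_bound (φ : ℂ → (U →L[ℂ] Y)) (vc : Hc →ₗ[ℂ] (ℂ → U)) (kc : ℂ → U → Hc)
    (hrep : ∀ (f : Hc) (l : ℂ), 0 < l.re → ∀ u : U,
      (inner ℂ (kc l u) f : ℂ) = inner ℂ u (vc f l))
    (hker : ∀ m l : ℂ, 0 < m.re → 0 < l.re → ∀ u : U,
      vc (kc l u) m = ((m + (starRingEnd ℂ) l)⁻¹ : ℂ)
        • (u - ContinuousLinearMap.adjoint (φ ((starRingEnd ℂ) m))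
            (φ ((starRingEnd ℂ) l) u)))
    (α : ℂ) (hα : 0 < α.re)
    {ι : Type*} (s : Finset ι) (l : ι → ℂ) (e : ι → U)
    (hl : ∀ i ∈ s, 0 < (l i).re) (hl2 : ∀ i ∈ s, l i ≠ (starRingEnd ℂ) α) :
    α.re * ‖∑ i ∈ s, (α - (starRingEnd ℂ) (l i))⁻¹ •
        (kc (l i) (e i) - kc ((starRingEnd ℂ) α) (e i))‖
      ≤ ‖∑ i ∈ s, kc (l i) (e i)‖ := by
  set β : ℂ := (starRingEnd ℂ) α with hβ
  have hβre : 0 < β.re := by rw [hβ, Complex.conj_re]; exact hα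
  set c : ι → ℂ := fun i => (α - (starRingEnd ℂ) (l i))⁻¹ with hc
  have hcinv : ∀ i ∈ s, (α - (starRingEnd ℂ) (l i)) * c i = 1 := by
    intro i hi
    refine mul_inv_cancel₀ ?_
    intro h
    rw [sub_eq_zero] at h
    exact hl2 i hi (by rw [← Complex.conj_conj (l i), ← h, hβ])
  set Z : Hc := ∑ i ∈ s, c i • (kc (l i) (e i) - kc β (e i)) with hZ
  set m : Hc := ∑ i ∈ s, kc (l i) (e i) with hm
  -- the doubled family
  set q : ι ⊕ ι → ℂ := Sum.elim l (fun _ => β) with hq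
  set g : ι ⊕ ι → U := Sum.elim (fun i => c i • e i) (fun i => -(c i • e i)) with hg
  have hqre : ∀ r ∈ s.disjSum s, 0 < (q r).re := by
    rintro (i | i) hr
    · exact hl i (by simpa using hr)
    · exact hβre
  have hid := diss_identity φ vc kc hrep hker (s.disjSum s) q g hqre
  -- identify the sums
  have hsumg : (∑ r ∈ s.disjSum s, g r) = 0 := by
    rw [Finset.sum_disjSum]
    simp [hg]
  have hZ' : (∑ r ∈ s.disjSum s, kc (q r) (g r)) = Z := by
    rw [Finset.sum_disjSum, hZ]
    rw [← Finset.sum_add_distrib]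
    refine Finset.sum_congr rfl fun i hi => ?_
    simp only [hq, hg, Sum.elim_inl, Sum.elim_inr]
    rw [kc_smul vc kc hrep (hl i hi), show -(c i • e i) = (-(c i)) • e i by simp,
      kc_smul vc kc hrep hβre, smul_sub]
    module
  have hB' : (∑ r ∈ s.disjSum s, kc (q r) ((starRingEnd ℂ) (q r) • g r)) = α • Z - m := by
    rw [Finset.sum_disjSum, hZ, hm, Finset.smul_sum, ← Finset.sum_sub_distrib,
      ← Finset.sum_add_distrib]
    refine Finset.sum_congr rfl fun i hi => ?_
    simp only [hq, hg, Sum.elim_inl, Sum.elim_inr]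
    rw [show (starRingEnd ℂ) (l i) • (c i • e i) = ((starRingEnd ℂ) (l i) * c i) • e i by
        module,
      show (starRingEnd ℂ) β • -(c i • e i) = (-(α * c i)) • e i by
        rw [hβ, Complex.conj_conj]; module,
      kc_smul vc kc hrep (hl i hi), kc_smul vc kc hrep hβre]
    have key : (starRingEnd ℂ) (l i) * c i = α * c i - 1 := by
      have := hcinv i hi
      ring_nf
      ring_nf at this
      linear_combination -this
    rw [key]
    module
  rw [hsumg, hZ', hB'] at hid
  simp only [inner_zero_left] at hid
  -- real parts
  have hconj : (⟪Z, α • Z - m⟫ : ℂ) = (starRingEnd ℂ) ⟪α • Z - m, Z⟫ := by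
    rw [inner_conj_symm]
  have hre : 2 * (⟪α • Z - m, Z⟫ : ℂ).re ≤ 0 := by
    have h1 : ((⟪α • Z - m, Z⟫ : ℂ) + ⟪Z, α • Z - m⟫).re
        = (0 - (⟪∑ i ∈ s.disjSum s, φ ((starRingEnd ℂ) (q i)) (g i),
            ∑ i ∈ s.disjSum s, φ ((starRingEnd ℂ) (q i)) (g i)⟫ : ℂ)).re := by rw [hid]
    rw [Complex.add_re, hconj, Complex.conj_re] at h1
    have h2 : 0 ≤ (⟪∑ i ∈ s.disjSum s, φ ((starRingEnd ℂ) (q i)) (g i),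
        ∑ i ∈ s.disjSum s, φ ((starRingEnd ℂ) (q i)) (g i)⟫ : ℂ).re := by
      rw [← RCLike.re_to_complex]
      exact inner_self_nonneg
    rw [Complex.sub_re, Complex.zero_re] at h1
    linarith
  have hmz : α.re * (‖Z‖ * ‖Z‖) ≤ ‖m‖ * ‖Z‖ := by
    have e1 : (⟪m, Z⟫ : ℂ) = (starRingEnd ℂ) α * ⟪Z, Z⟫ - ⟪α • Z - m, Z⟫ := by
      rw [inner_sub_left, inner_smul_left]
      ring
    have eRe : (⟪Z, Z⟫ : ℂ).re = ‖Z‖ ^ 2 := by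
      rw [← RCLike.re_to_complex]; exact inner_self_eq_norm_sq Z
    have eIm : (⟪Z, Z⟫ : ℂ).im = 0 := by
      rw [← RCLike.im_to_complex]; exact inner_self_im Z
    have e3 : (⟪m, Z⟫ : ℂ).re = α.re * (‖Z‖ * ‖Z‖) - (⟪α • Z - m, Z⟫ : ℂ).re := by
      rw [e1, Complex.sub_re, Complex.mul_re, eRe, eIm, Complex.conj_re, Complex.conj_im]
      ring
    have e4 : (⟪m, Z⟫ : ℂ).re ≤ ‖m‖ * ‖Z‖ := by
      calc (⟪m, Z⟫ : ℂ).re ≤ ‖(⟪m, Z⟫ : ℂ)‖ := Complex.re_le_norm _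
        _ ≤ ‖m‖ * ‖Z‖ := norm_inner_le_norm m Z
    linarith
  rcases eq_or_lt_of_le (norm_nonneg Z) with h0 | h0
  · rw [← h0]
    simpa using norm_nonneg m
  · have := (mul_le_mul_iff_of_pos_right h0).mp (by linarith [hmz] : (α.re * ‖Z‖) * ‖Z‖ ≤ ‖m‖ * ‖Z‖)
    exact this


set_option maxHeartbeats 1000000 in
lemma exists_model_z (φ : ℂ → (U →L[ℂ] Y)) (vc : Hc →ₗ[ℂ] (ℂ → U)) (kc : ℂ → U → Hc)
    (hrep : ∀ (f : Hc) (l : ℂ), 0 < l.re → ∀ u : U,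
      (inner ℂ (kc l u) f : ℂ) = inner ℂ u (vc f l))
    (hker : ∀ m l : ℂ, 0 < m.re → 0 < l.re → ∀ u : U,
      vc (kc l u) m = ((m + (starRingEnd ℂ) l)⁻¹ : ℂ)
        • (u - ContinuousLinearMap.adjoint (φ ((starRingEnd ℂ) m))
            (φ ((starRingEnd ℂ) l) u)))
    (α : ℂ) (hα : 0 < α.re) (x : Hc) :
    ∃ z : Hc, ∀ l : ℂ, 0 < l.re → l ≠ (starRingEnd ℂ) α →
      vc z l = ((starRingEnd ℂ) α - l)⁻¹ • (vc x l - vc x ((starRingEnd ℂ) α)) := by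
  classical
  have hβre : 0 < ((starRingEnd ℂ) α).re := by simpa using hα
  set gfun : ℂ → U := fun l =>
    ((starRingEnd ℂ) α - l)⁻¹ • (vc x l - vc x ((starRingEnd ℂ) α)) with hgfun
  set I : Type _ := {p : ℂ × U // 0 < p.1.re ∧ p.1 ≠ (starRingEnd ℂ) α} with hI
  set kcf : I → Hc := fun p => kc p.1.1 p.1.2 with hkcf
  set tf : I → ℂ := fun p => (inner ℂ (gfun p.1.1) p.1.2 : ℂ) with htf
  -- the crucial norm bound
  have hbound : ∀ a : I →₀ ℂ,
      ‖Finsupp.linearCombination ℂ tf a‖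
        ≤ (‖x‖ / α.re) * ‖Finsupp.linearCombination ℂ kcf a‖ := by
    intro a
    have hψ : Finsupp.linearCombination ℂ tf a = ∑ p ∈ a.support, a p • tf p := by
      rw [Finsupp.linearCombination_apply, Finsupp.sum]
    have hΦ : Finsupp.linearCombination ℂ kcf a
        = ∑ p ∈ a.support, kc p.1.1 (a p • p.1.2) := by
      rw [Finsupp.linearCombination_apply, Finsupp.sum]
      exact Finset.sum_congr rfl fun p _ => (kc_smul vc kc hrep p.2.1 (a p) p.1.2).symm
    set Z' : Hc := ∑ p ∈ a.support, (α - (starRingEnd ℂ) p.1.1)⁻¹ •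
        (kc p.1.1 (a p • p.1.2) - kc ((starRingEnd ℂ) α) (a p • p.1.2)) with hZ'
    have hψZ : Finsupp.linearCombination ℂ tf a = (inner ℂ x Z' : ℂ) := by
      rw [hψ, hZ', inner_sum]
      refine Finset.sum_congr rfl fun p _ => ?_
      have hlre : 0 < p.1.1.re := p.2.1
      have e0 : ∀ v : U, (inner ℂ x (kc p.1.1 v) : ℂ) = inner ℂ (vc x p.1.1) v := by
        intro v
        rw [← inner_conj_symm, hrep x p.1.1 hlre v, inner_conj_symm]
      have e0' : ∀ v : U, (inner ℂ x (kc ((starRingEnd ℂ) α) v) : ℂ)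
          = inner ℂ (vc x ((starRingEnd ℂ) α)) v := by
        intro v
        rw [← inner_conj_symm, hrep x _ hβre v, inner_conj_symm]
      rw [inner_smul_right, inner_sub_right, e0, e0']
      rw [htf, hgfun]
      simp only [smul_eq_mul]
      rw [inner_smul_left, inner_smul_right, inner_smul_right]
      rw [show ((starRingEnd ℂ) (((starRingEnd ℂ) α - p.1.1)⁻¹) : ℂ)
          = (α - (starRingEnd ℂ) p.1.1)⁻¹ by
        rw [map_inv₀, map_sub, Complex.conj_conj]]
      rw [inner_sub_left]
      ring
    have hZbound := resolvent_bound φ vc kc hrep hker α hα a.support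
      (fun p => p.1.1) (fun p => a p • p.1.2) (fun p _ => p.2.1) (fun p _ => p.2.2)
    rw [← hZ', ← hΦ] at hZbound
    have h1 : ‖Finsupp.linearCombination ℂ tf a‖ ≤ ‖x‖ * ‖Z'‖ := by
      rw [hψZ]; exact norm_inner_le_norm x Z'
    have h2 : ‖Z'‖ ≤ ‖Finsupp.linearCombination ℂ kcf a‖ / α.re :=
      (le_div_iff₀' hα).mpr hZbound
    calc ‖Finsupp.linearCombination ℂ tf a‖ ≤ ‖x‖ * ‖Z'‖ := h1
      _ ≤ ‖x‖ * (‖Finsupp.linearCombination ℂ kcf a‖ / α.re) :=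
          mul_le_mul_of_nonneg_left h2 (norm_nonneg x)
      _ = (‖x‖ / α.re) * ‖Finsupp.linearCombination ℂ kcf a‖ := by ring
  have hkerle : LinearMap.ker (Finsupp.linearCombination ℂ kcf)
      ≤ LinearMap.ker (Finsupp.linearCombination ℂ tf) := by
    intro a ha
    rw [LinearMap.mem_ker] at ha ⊢
    have := hbound a
    rw [ha, norm_zero, mul_zero] at this
    exact norm_le_zero_iff.mp this
  set χlin : ↥(LinearMap.range (Finsupp.linearCombination ℂ kcf)) →ₗ[ℂ] ℂ :=
    (Submodule.liftQ (LinearMap.ker (Finsupp.linearCombination ℂ kcf))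
        (Finsupp.linearCombination ℂ tf) hkerle).comp
      (LinearMap.quotKerEquivRange (Finsupp.linearCombination ℂ kcf)).symm.toLinearMap
    with hχlin
  have hχval : ∀ a : I →₀ ℂ,
      χlin ⟨Finsupp.linearCombination ℂ kcf a,
        LinearMap.mem_range_self (Finsupp.linearCombination ℂ kcf) a⟩
      = Finsupp.linearCombination ℂ tf a := by
    intro a
    rw [hχlin]
    simp only [LinearMap.coe_comp, LinearEquiv.coe_coe, Function.comp_apply]
    rw [LinearMap.quotKerEquivRange_symm_apply_image, Submodule.mkQ_apply,
      Submodule.liftQ_apply]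
  have hχbound : ∀ m : ↥(LinearMap.range (Finsupp.linearCombination ℂ kcf)),
      ‖χlin m‖ ≤ (‖x‖ / α.re) * ‖m‖ := by
    rintro ⟨mv, hm⟩
    obtain ⟨a, rfl⟩ := hm
    rw [show (⟨Finsupp.linearCombination ℂ kcf a, _⟩ :
        ↥(LinearMap.range (Finsupp.linearCombination ℂ kcf)))
      = ⟨Finsupp.linearCombination ℂ kcf a,
          LinearMap.mem_range_self (Finsupp.linearCombination ℂ kcf) a⟩ from rfl, hχval a]
    exact hbound a
  obtain ⟨G, hG, -⟩ := exists_extension_norm_eq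
    (LinearMap.range (Finsupp.linearCombination ℂ kcf))
    (LinearMap.mkContinuous χlin (‖x‖ / α.re) hχbound)
  refine ⟨(InnerProductSpace.toDual ℂ Hc).symm G, ?_⟩
  intro l hl hlne
  have hzdual : ∀ wv : Hc,
      (inner ℂ ((InnerProductSpace.toDual ℂ Hc).symm G) wv : ℂ) = G wv := by
    intro wv
    rw [← InnerProductSpace.toDual_apply_apply, LinearIsometryEquiv.apply_symm_apply]
  have hgoal : gfun l = ((starRingEnd ℂ) α - l)⁻¹ • (vc x l - vc x ((starRingEnd ℂ) α)) := rfl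
  rw [← hgoal]
  apply ext_inner_left ℂ
  intro v
  have hp : 0 < ((l, v) : ℂ × U).1.re ∧ ((l, v) : ℂ × U).1 ≠ (starRingEnd ℂ) α := ⟨hl, hlne⟩
  have hsingle : Finsupp.linearCombination ℂ kcf (Finsupp.single ⟨(l, v), hp⟩ 1) = kc l v := by
    rw [Finsupp.linearCombination_single, one_smul]
  have hmem : kc l v ∈ LinearMap.range (Finsupp.linearCombination ℂ kcf) :=
    ⟨Finsupp.single ⟨(l, v), hp⟩ 1, hsingle⟩
  have h2 : (inner ℂ ((InnerProductSpace.toDual ℂ Hc).symm G) (kc l v) : ℂ)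
      = inner ℂ (gfun l) v := by
    rw [hzdual]
    have h3 : G (kc l v)
        = LinearMap.mkContinuous χlin (‖x‖ / α.re) hχbound ⟨kc l v, hmem⟩ :=
      hG ⟨kc l v, hmem⟩
    rw [h3]
    have h4 : (⟨kc l v, hmem⟩ :
        ↥(LinearMap.range (Finsupp.linearCombination ℂ kcf)))
        = ⟨Finsupp.linearCombination ℂ kcf (Finsupp.single ⟨(l, v), hp⟩ 1),
            LinearMap.mem_range_self (Finsupp.linearCombination ℂ kcf) _⟩ :=
      Subtype.ext hsingle.symm
    rw [LinearMap.mkContinuous_apply, h4, hχval]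
    rw [Finsupp.linearCombination_single, one_smul]
  calc (inner ℂ v (vc ((InnerProductSpace.toDual ℂ Hc).symm G) l) : ℂ)
      = inner ℂ (kc l v) ((InnerProductSpace.toDual ℂ Hc).symm G) := (hrep _ l hl v).symm
    _ = (starRingEnd ℂ) (inner ℂ ((InnerProductSpace.toDual ℂ Hc).symm G) (kc l v) : ℂ) :=
        (inner_conj_symm _ _).symm
    _ = (starRingEnd ℂ) (inner ℂ (gfun l) v : ℂ) := by rw [h2]
    _ = inner ℂ v (gfun l) := inner_conj_symm _ _

end aux

/-- **Resolvent formula for `A_c*` on the dual de Branges–Rovnyak space `H_c`.**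
`Hc` is the abstract model of the space with kernel
`K_c(μ,λ) = (1 - φ(conj μ)* φ(conj λ))/(μ + conj λ)`; elements are holomorphic
on `ℂ⁺` and satisfy the `H²`-decay estimate.  `A_c*` has domain
`{x ∈ Hc : ∃ u ∈ U, μ ↦ μ x(μ) - u ∈ Hc}` with
`(A_c* x)(μ) = μ x(μ) - lim_{Re η → ∞} η x(η)`.  For `α ∈ ℂ⁺` and `x ∈ Hc`
there are `z ∈ dom(A_c*)` (with `w = A_c* z`, `u = lim_{Re η→∞} η z(η)`) with
`(conj α - A_c*) z = x` and `z(μ) = (x(μ) - x(conj α))/(conj α - μ)` on `ℂ⁺`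
(away from the removable singularity at `μ = conj α`). -/
theorem dbr_dual_resolvent_formula
    {U Y Hc : Type*}
    [NormedAddCommGroup U] [InnerProductSpace ℂ U] [CompleteSpace U]
    [NormedAddCommGroup Y] [InnerProductSpace ℂ Y] [CompleteSpace Y]
    [NormedAddCommGroup Hc] [InnerProductSpace ℂ Hc] [CompleteSpace Hc]
    (φ : ℂ → (U →L[ℂ] Y))
    (hφcontr : ∀ μ : ℂ, 0 < μ.re → ‖φ μ‖ ≤ 1)
    (hφhol : DifferentiableOn ℂ φ {μ : ℂ | 0 < μ.re})
    (vc : Hc →ₗ[ℂ] (ℂ → U)) (kc : ℂ → U → Hc)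
    (hrep : ∀ (f : Hc) (l : ℂ), 0 < l.re → ∀ u : U,
      (inner ℂ (kc l u) f : ℂ) = inner ℂ u (vc f l))
    (hker : ∀ m l : ℂ, 0 < m.re → 0 < l.re → ∀ u : U,
      vc (kc l u) m = ((m + (starRingEnd ℂ) l)⁻¹ : ℂ)
        • (u - ContinuousLinearMap.adjoint (φ ((starRingEnd ℂ) m))
            (φ ((starRingEnd ℂ) l) u)))
    (hhol : ∀ x : Hc, DifferentiableOn ℂ (vc x) {μ : ℂ | 0 < μ.re})
    (hdecay : ∀ (x : Hc) (μ : ℂ), 0 < μ.re →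
      ‖vc x μ‖ ≤ ‖x‖ / Real.sqrt (2 * μ.re))
    (α : ℂ) (hα : 0 < α.re) (x : Hc) :
    ∃ z w : Hc, ∃ u : U,
      (∀ μ : ℂ, 0 < μ.re → μ ≠ (starRingEnd ℂ) α →
        vc z μ = ((starRingEnd ℂ) α - μ)⁻¹ • (vc x μ - vc x ((starRingEnd ℂ) α))) ∧
      (∀ μ : ℂ, 0 < μ.re → vc w μ = μ • vc z μ - u) ∧
      Tendsto (fun η : ℂ => η • vc z η) (comap Complex.re atTop) (nhds u) ∧
      (starRingEnd ℂ) α • z - w = x := by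
  obtain ⟨z, hzval⟩ := exists_model_z φ vc kc hrep hker α hα x
  refine ⟨z, (starRingEnd ℂ) α • z - x, vc x ((starRingEnd ℂ) α), hzval, ?_, ?_, ?_⟩
  · -- w = A_c* z
    intro μ hμ
    have hvw : vc ((starRingEnd ℂ) α • z - x) μ
        = (starRingEnd ℂ) α • vc z μ - vc x μ := by
      rw [map_sub, map_smul]; rfl
    rw [hvw]
    by_cases hne : μ = (starRingEnd ℂ) α
    · subst hne; rfl
    · rw [hzval μ hμ hne]
      have hβμ : (starRingEnd ℂ) α - μ ≠ 0 := sub_ne_zero.mpr (Ne.symm hne)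
      have hD : ((starRingEnd ℂ) α - μ) •
          (((starRingEnd ℂ) α - μ)⁻¹ • (vc x μ - vc x ((starRingEnd ℂ) α)))
          = vc x μ - vc x ((starRingEnd ℂ) α) := by
        rw [smul_smul, mul_inv_cancel₀ hβμ, one_smul]
      rw [sub_eq_sub_iff_sub_eq_sub, ← sub_smul]
      exact hD
  · -- the limit
    have hre_t : Tendsto Complex.re (comap Complex.re atTop) atTop := tendsto_comap
    have hx0 : Tendsto (fun η : ℂ => vc x η) (comap Complex.re atTop) (nhds 0) := by
      apply squeeze_zero_norm' (a := fun η : ℂ => ‖x‖ / Real.sqrt (2 * η.re))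
      · filter_upwards [hre_t.eventually_gt_atTop 0] with η hη
        exact hdecay x η hη
      · have hsq : Tendsto (fun t : ℝ => Real.sqrt (2 * t)) atTop atTop := by
          apply tendsto_atTop_atTop.mpr
          intro b
          refine ⟨max 0 (b ^ 2), fun t ht => ?_⟩
          have ht0 : (0 : ℝ) ≤ t := le_trans (le_max_left _ _) ht
          have hb2 : b ^ 2 ≤ t := le_trans (le_max_right _ _) ht
          calc b ≤ |b| := le_abs_self b
            _ = Real.sqrt (b ^ 2) := (Real.sqrt_sq_eq_abs b).symm
            _ ≤ Real.sqrt (2 * t) := Real.sqrt_le_sqrt (by nlinarith)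
        have hdiv : Tendsto (fun t : ℝ => ‖x‖ / Real.sqrt (2 * t)) atTop (nhds 0) :=
          Tendsto.div_atTop tendsto_const_nhds hsq
        exact hdiv.comp hre_t
    have hsc : Tendsto (fun η : ℂ => η * ((starRingEnd ℂ) α - η)⁻¹)
        (comap Complex.re atTop) (nhds (-1)) := by
      have h1 : Tendsto (fun η : ℂ => (starRingEnd ℂ) α * ((starRingEnd ℂ) α - η)⁻¹)
          (comap Complex.re atTop) (nhds 0) := by
        apply squeeze_zero_norm'
          (a := fun η : ℂ => ‖(starRingEnd ℂ) α‖ * (η.re - α.re)⁻¹)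
        · filter_upwards [hre_t.eventually_gt_atTop α.re] with η hη
          rw [norm_mul]
          refine mul_le_mul_of_nonneg_left ?_ (norm_nonneg _)
          rw [norm_inv]
          refine inv_anti₀ (by linarith) ?_
          calc η.re - α.re = -(((starRingEnd ℂ) α - η).re) := by
                rw [Complex.sub_re, Complex.conj_re]; ring
            _ ≤ |(((starRingEnd ℂ) α - η).re)| := neg_le_abs _
            _ ≤ ‖(starRingEnd ℂ) α - η‖ := Complex.abs_re_le_norm _
            _ = ‖(starRingEnd ℂ) α - η‖ := rfl
        · have h2 : Tendsto (fun t : ℝ => ‖(starRingEnd ℂ) α‖ * (t - α.re)⁻¹)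
              atTop (nhds 0) := by
            have h2a := Tendsto.comp (tendsto_inv_atTop_zero (𝕜 := ℝ))
              (tendsto_atTop_add_const_right atTop (-α.re) tendsto_id)
            have h2b := h2a.const_mul ‖(starRingEnd ℂ) α‖
            simpa [Function.comp, sub_eq_add_neg] using h2b
          exact h2.comp hre_t
      have h3 : Tendsto (fun η : ℂ => (starRingEnd ℂ) α * ((starRingEnd ℂ) α - η)⁻¹ - 1)
          (comap Complex.re atTop) (nhds (-1)) := by
        have := h1.sub_const 1
        simpa using this
      apply h3.congr'
      filter_upwards [hre_t.eventually_gt_atTop α.re] with η hη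
      have hne : (starRingEnd ℂ) α - η ≠ 0 := by
        intro h
        have h' : ((starRingEnd ℂ) α - η).re = 0 := by rw [h]; rfl
        rw [Complex.sub_re, Complex.conj_re] at h'
        linarith
      field_simp
      ring
    have hfin : Tendsto (fun η : ℂ =>
        (η * ((starRingEnd ℂ) α - η)⁻¹) • (vc x η - vc x ((starRingEnd ℂ) α)))
        (comap Complex.re atTop) (nhds (vc x ((starRingEnd ℂ) α))) := by
      have h5 := hsc.smul (hx0.sub (tendsto_const_nhds (x := vc x ((starRingEnd ℂ) α))))
      have h6 : ((-1 : ℂ)) • ((0 : U) - vc x ((starRingEnd ℂ) α)) = vc x ((starRingEnd ℂ) α) := by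
        simp
      rw [h6] at h5
      exact h5
    apply hfin.congr'
    filter_upwards [hre_t.eventually_gt_atTop α.re, hre_t.eventually_gt_atTop 0] with η hη hη0
    have hne : η ≠ (starRingEnd ℂ) α := by
      intro h
      rw [h, Complex.conj_re] at hη
      exact lt_irrefl _ hη
    rw [hzval η hη0 hne, smul_smul]
  · exact sub_sub_cancel _ _
end

section
/- Let H_o be the de Branges–Rovnyak space of a Schur function φ ∈ S(ℂ⁺;U,Y) with kernel K_o(μ,λ) = (1 − φ(μ)φ(λ)*)/(μ + conj λ), and let A_o be the operator with domain dom(A_o) = {x ∈ H_o : ∃ y ∈ Y with μ ↦ μ x(μ) − y ∈ H_o} and (A_o x)(μ) = μ x(μ) − lim_{Re η→∞} η x(η). Then for every α ∈ ℂ⁺ and x ∈ H_o, the function μ ↦ (x(μ) − x(α))/(α − μ) lies in dom(A_o) and (α − A_o) applied to it returns x; i.e., ((α − A_o)⁻¹ x)(μ) = (x(μ) − x(α))/(α − μ). Moreover C_o(α − A_o)⁻¹ x = x(α), where C_o x = lim_{Re η→∞} η x(η). -/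
open Filter

local notation "⟪" x ", " y "⟫" => @inner ℂ _ _ x y

private lemma dbr_inner_lincomb {V ι : Type*} [NormedAddCommGroup V] [InnerProductSpace ℂ V]
    (f g : ι → V) (c : ι →₀ ℂ) :
    ⟪(Finsupp.linearCombination ℂ f) c, (Finsupp.linearCombination ℂ g) c⟫
      = ∑ i ∈ c.support, ∑ j ∈ c.support,
          (starRingEnd ℂ) (c i) * c j * ⟪f i, g j⟫ := by
  classical
  rw [Finsupp.linearCombination_apply, Finsupp.linearCombination_apply, Finsupp.sum, Finsupp.sum,
    sum_inner]
  refine Finset.sum_congr rfl fun i _ => ?_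
  rw [inner_sum]
  refine Finset.sum_congr rfl fun j _ => ?_
  rw [inner_smul_left, inner_smul_right]; ring

private lemma dbr_sqrt_atTop : Tendsto (fun t : ℝ => Real.sqrt (2 * t)) atTop atTop := by
  rw [tendsto_atTop_atTop]
  intro b
  refine ⟨b ^ 2, fun a ha => ?_⟩
  rcases le_or_gt b 0 with hb | hb
  · exact hb.trans (Real.sqrt_nonneg _)
  · have h2 : b ^ 2 ≤ 2 * a := by nlinarith
    calc b = Real.sqrt (b ^ 2) := by rw [Real.sqrt_sq hb.le]
    _ ≤ Real.sqrt (2 * a) := Real.sqrt_le_sqrt h2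

set_option maxHeartbeats 1000000 in
private theorem dbr_exists_z
    {U Y Ho : Type*}
    [NormedAddCommGroup U] [InnerProductSpace ℂ U] [CompleteSpace U]
    [NormedAddCommGroup Y] [InnerProductSpace ℂ Y] [CompleteSpace Y]
    [NormedAddCommGroup Ho] [InnerProductSpace ℂ Ho] [CompleteSpace Ho]
    (φ : ℂ → (U →L[ℂ] Y))
    (vo : Ho →ₗ[ℂ] (ℂ → Y)) (ko : ℂ → Y → Ho)
    (hrep : ∀ (f : Ho) (l : ℂ), 0 < l.re → ∀ y : Y,
      (inner ℂ (ko l y) f : ℂ) = inner ℂ y (vo f l))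
    (hker : ∀ m l : ℂ, 0 < m.re → 0 < l.re → ∀ y : Y,
      vo (ko l y) m = ((m + (starRingEnd ℂ) l)⁻¹ : ℂ)
        • (y - φ m (ContinuousLinearMap.adjoint (φ l) y)))
    (α : ℂ) (hα : 0 < α.re) (x : Ho) :
    ∃ z : Ho, ∀ μ : ℂ, 0 < μ.re → μ ≠ α →
      vo z μ = (α - μ)⁻¹ • (vo x μ - vo x α) := by
  classical
  -- nonvanishing of denominators
  have hden : ∀ m l : ℂ, 0 < m.re → 0 < l.re → m + (starRingEnd ℂ) l ≠ 0 := by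
    intro m l hm hl h
    have h1 : (m + (starRingEnd ℂ) l).re = m.re + l.re := by
      simp [Complex.add_re, Complex.conj_re]
    rw [h] at h1
    simp only [Complex.zero_re] at h1
    linarith
  -- multiplied-out reproducing formula
  have hI : ∀ m l : ℂ, 0 < m.re → 0 < l.re → ∀ p q : Y,
      (m + (starRingEnd ℂ) l) * ⟪ko m p, ko l q⟫
        = ⟪p, q⟫ - ⟪p, φ m (ContinuousLinearMap.adjoint (φ l) q)⟫ := by
    intro m l hm hl p q
    have h1 : ⟪ko m p, ko l q⟫
        = (m + (starRingEnd ℂ) l)⁻¹ * (⟪p, q⟫ - ⟪p, φ m (ContinuousLinearMap.adjoint (φ l) q)⟫) := by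
      rw [hrep (ko l q) m hm p, hker m l hm hl q, inner_smul_right, inner_sub_right]
    rw [h1, ← mul_assoc, mul_inv_cancel₀ (hden m l hm hl), one_mul]
  -- index type and generators
  set ι := ({l : ℂ // 0 < l.re ∧ l ≠ α} × Y) with hι
  set gg : ι → Ho := fun i => (starRingEnd ℂ) (α - i.1.1) • ko i.1.1 i.2 with hgg
  set ee : ι → Ho := fun i => ko i.1.1 i.2 - ko α i.2 with hee
  set bb : ι → U := fun i => ContinuousLinearMap.adjoint (φ i.1.1) i.2
      - ContinuousLinearMap.adjoint (φ α) i.2 with hbb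
  -- key algebraic identity
  have key : ∀ i j : ι, ⟪ee i, gg j⟫ + ⟪gg i, ee j⟫
      = (α + (starRingEnd ℂ) α) * ⟪ee i, ee j⟫ + ⟪bb i, bb j⟫ := by
    rintro ⟨⟨m, hm, hmne⟩, p⟩ ⟨⟨l, hl, hlne⟩, q⟩
    have h1 := hI m l hm hl p q
    have h2 := hI α l hα hl p q
    have h3 := hI m α hm hα p q
    have h4 := hI α α hα hα p q
    simp only [hgg, hee, hbb, inner_sub_left, inner_sub_right, inner_smul_left,
      inner_smul_right, map_sub, Complex.conj_conj,
      ContinuousLinearMap.adjoint_inner_left]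
    linear_combination (h2 + h3) - h1 - h4
  -- linear combination maps
  set θ : (ι →₀ ℂ) →ₗ[ℂ] Ho := Finsupp.linearCombination ℂ gg with hθdef
  set σ : (ι →₀ ℂ) →ₗ[ℂ] Ho := Finsupp.linearCombination ℂ ee with hσdef
  set τ : (ι →₀ ℂ) →ₗ[ℂ] U := Finsupp.linearCombination ℂ bb with hτdef
  -- summed identity
  have hsum : ∀ c : ι →₀ ℂ, ⟪σ c, θ c⟫ + ⟪θ c, σ c⟫
      = (α + (starRingEnd ℂ) α) * ⟪σ c, σ c⟫ + ⟪τ c, τ c⟫ := by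
    intro c
    rw [hθdef, hσdef, hτdef, dbr_inner_lincomb, dbr_inner_lincomb, dbr_inner_lincomb,
      dbr_inner_lincomb, Finset.mul_sum, ← Finset.sum_add_distrib,
      ← Finset.sum_add_distrib]
    refine Finset.sum_congr rfl fun i _ => ?_
    rw [Finset.mul_sum, ← Finset.sum_add_distrib, ← Finset.sum_add_distrib]
    refine Finset.sum_congr rfl fun j _ => ?_
    linear_combination ((starRingEnd ℂ) (c i) * c j) * key i j
  -- real quadratic inequality
  have hre : ∀ c : ι →₀ ℂ, α.re * ‖σ c‖ ^ 2 ≤ RCLike.re ⟪σ c, θ c⟫ := by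
    intro c
    have h1 := hsum c
    have hc : ⟪θ c, σ c⟫ = (starRingEnd ℂ) ⟪σ c, θ c⟫ := (inner_conj_symm _ _).symm
    rw [hc, Complex.add_conj, inner_self_eq_norm_sq_to_K, inner_self_eq_norm_sq_to_K,
      Complex.add_conj] at h1
    push_cast at h1
    have h3 : 2 * (⟪σ c, θ c⟫).re = 2 * α.re * ‖σ c‖ ^ 2 + ‖τ c‖ ^ 2 := by
      have h2 := congrArg Complex.re h1
      simpa [← Complex.ofReal_pow] using h2
    have h4 : (0:ℝ) ≤ ‖τ c‖ ^ 2 := sq_nonneg _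
    rw [RCLike.re_to_complex]
    linarith
  -- norm bound for the functional
  set Λ : (ι →₀ ℂ) →ₗ[ℂ] ℂ := (innerSL ℂ x).toLinearMap.comp σ with hΛdef
  have hΛval : ∀ c : ι →₀ ℂ, Λ c = ⟪x, σ c⟫ := fun c => rfl
  have hbound : ∀ c : ι →₀ ℂ, ‖Λ c‖ ≤ (‖x‖ / α.re) * ‖θ c‖ := by
    intro c
    have h1 : α.re * ‖σ c‖ ^ 2 ≤ ‖σ c‖ * ‖θ c‖ :=
      le_trans (hre c) (re_inner_le_norm _ _)
    have h2 : ‖σ c‖ ≤ ‖θ c‖ / α.re := by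
      rcases eq_or_lt_of_le (norm_nonneg (σ c)) with h | h
      · rw [← h]
        positivity
      · rw [le_div_iff₀ hα]
        nlinarith
    calc ‖Λ c‖ = ‖⟪x, σ c⟫‖ := rfl
      _ ≤ ‖x‖ * ‖σ c‖ := norm_inner_le_norm _ _
      _ ≤ ‖x‖ * (‖θ c‖ / α.re) := by
          exact mul_le_mul_of_nonneg_left h2 (norm_nonneg x)
      _ = (‖x‖ / α.re) * ‖θ c‖ := by ring
  -- descend to the range of θ
  have hkerle : LinearMap.ker θ ≤ LinearMap.ker Λ := by
    intro c hc
    rw [LinearMap.mem_ker] at hc ⊢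
    have := hbound c
    rw [hc, norm_zero, mul_zero] at this
    exact norm_le_zero_iff.mp this
  set F₀ : LinearMap.range θ →ₗ[ℂ] ℂ :=
    ((LinearMap.ker θ).liftQ Λ hkerle).comp
      (LinearMap.quotKerEquivRange θ).symm.toLinearMap with hF₀def
  have hF₀ : ∀ (c : ι →₀ ℂ) (h : θ c ∈ LinearMap.range θ), F₀ ⟨θ c, h⟩ = Λ c := by
    intro c h
    rw [hF₀def]
    simp only [LinearMap.comp_apply, LinearEquiv.coe_toLinearMap]
    rw [LinearMap.quotKerEquivRange_symm_apply_image]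
    exact Submodule.liftQ_apply _ _ _
  have hF₀bound : ∀ v : LinearMap.range θ, ‖F₀ v‖ ≤ (‖x‖ / α.re) * ‖v‖ := by
    rintro ⟨u, hu⟩
    obtain ⟨c, rfl⟩ := LinearMap.mem_range.mp hu
    rw [hF₀ c hu]
    exact hbound c
  set F : LinearMap.range θ →L[ℂ] ℂ := F₀.mkContinuous (‖x‖ / α.re) hF₀bound with hFdef
  obtain ⟨G, hG, -⟩ := exists_extension_norm_eq (LinearMap.range θ) F
  set z : Ho := (InnerProductSpace.toDual ℂ Ho).symm G with hzdef
  have hzval : ∀ v : Ho, ⟪z, v⟫ = G v := by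
    intro v
    rw [hzdef]
    exact InnerProductSpace.toDual_symm_apply
  clear_value z
  refine ⟨z, ?_⟩
  intro μ hμ hμne
  have hconjne : (starRingEnd ℂ) (α - μ) ≠ 0 := by
    intro h
    have h2 : α - μ = 0 := by
      have := congrArg (starRingEnd ℂ) h
      simpa using this
    exact (sub_ne_zero.mpr (Ne.symm hμne)) h2
  -- evaluate z against kernels
  have heval : ∀ q : Y, ⟪z, ko μ q⟫
      = ((starRingEnd ℂ) (α - μ))⁻¹ * (⟪x, ko μ q⟫ - ⟪x, ko α q⟫) := by
    intro q
    set i : ι := ⟨⟨μ, hμ, hμne⟩, q⟩ with hidef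
    set c : ι →₀ ℂ := Finsupp.single i (((starRingEnd ℂ) (α - μ))⁻¹) with hcdef
    have hθc : θ c = ko μ q := by
      rw [hθdef, hcdef, Finsupp.linearCombination_single, hgg]
      rw [smul_smul]
      rw [inv_mul_cancel₀ hconjne, one_smul]
    have hσc : σ c = ((starRingEnd ℂ) (α - μ))⁻¹ • (ko μ q - ko α q) := by
      rw [hσdef, hcdef, Finsupp.linearCombination_single, hee]
    have hmem : ko μ q ∈ LinearMap.range θ := ⟨c, hθc⟩
    have hmem' : θ c ∈ LinearMap.range θ := LinearMap.mem_range_self θ c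
    have hsub : (⟨ko μ q, hmem⟩ : LinearMap.range θ) = ⟨θ c, hmem'⟩ := Subtype.ext hθc.symm
    calc ⟪z, ko μ q⟫ = G (ko μ q) := hzval _
      _ = F (⟨ko μ q, hmem⟩ : LinearMap.range θ) := (hG ⟨ko μ q, hmem⟩)
      _ = F₀ (⟨ko μ q, hmem⟩ : LinearMap.range θ) := rfl
      _ = F₀ (⟨θ c, hmem'⟩ : LinearMap.range θ) := by rw [hsub]
      _ = Λ c := hF₀ c hmem'
      _ = ⟪x, σ c⟫ := hΛval c
      _ = ((starRingEnd ℂ) (α - μ))⁻¹ * (⟪x, ko μ q⟫ - ⟪x, ko α q⟫) := by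
          rw [hσc, inner_smul_right, inner_sub_right]
  -- conjugate and use the reproducing property
  have heval' : ∀ q : Y, ⟪ko μ q, z⟫ = (α - μ)⁻¹ * (⟪ko μ q, x⟫ - ⟪ko α q, x⟫) := by
    intro q
    have h1 := congrArg (starRingEnd ℂ) (heval q)
    rw [inner_conj_symm] at h1
    rw [h1]
    rw [map_mul, map_inv₀, Complex.conj_conj, map_sub, inner_conj_symm, inner_conj_symm]
  refine ext_inner_left ℂ fun q => ?_
  rw [← hrep z μ hμ q, heval' q, hrep x μ hμ q, hrep x α hα q,
    inner_smul_right, inner_sub_right]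

/-- **Resolvent formula for the main operator `A_o` of the observable model.**
`Ho` is the abstract model of the de Branges–Rovnyak space with kernel
`K_o(μ,λ) = (1 - φ(μ)φ(λ)*)/(μ + conj λ)`; elements are holomorphic on `ℂ⁺`
and satisfy the `H²`-decay estimate.  `A_o` has domain
`{x ∈ Ho : ∃ y ∈ Y, μ ↦ μ x(μ) - y ∈ Ho}` and
`(A_o x)(μ) = μ x(μ) - lim_{Re η→∞} η x(η)`, and `C_o x = lim_{Re η→∞} η x(η)`.
For `α ∈ ℂ⁺`, `x ∈ Ho`, the function `z : μ ↦ (x(μ) - x(α))/(α - μ)` lies in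
`dom(A_o)` (with `w = A_o z` and `y = lim_{Re η→∞} η z(η)`), `(α - A_o) z = x`,
and `C_o (α - A_o)⁻¹ x = y = x(α)`. -/
theorem dbr_observable_resolvent_formula
    {U Y Ho : Type*}
    [NormedAddCommGroup U] [InnerProductSpace ℂ U] [CompleteSpace U]
    [NormedAddCommGroup Y] [InnerProductSpace ℂ Y] [CompleteSpace Y]
    [NormedAddCommGroup Ho] [InnerProductSpace ℂ Ho] [CompleteSpace Ho]
    (φ : ℂ → (U →L[ℂ] Y))
    (hφcontr : ∀ μ : ℂ, 0 < μ.re → ‖φ μ‖ ≤ 1)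
    (hφhol : DifferentiableOn ℂ φ {μ : ℂ | 0 < μ.re})
    (vo : Ho →ₗ[ℂ] (ℂ → Y)) (ko : ℂ → Y → Ho)
    (hrep : ∀ (f : Ho) (l : ℂ), 0 < l.re → ∀ y : Y,
      (inner ℂ (ko l y) f : ℂ) = inner ℂ y (vo f l))
    (hker : ∀ m l : ℂ, 0 < m.re → 0 < l.re → ∀ y : Y,
      vo (ko l y) m = ((m + (starRingEnd ℂ) l)⁻¹ : ℂ)
        • (y - φ m (ContinuousLinearMap.adjoint (φ l) y)))
    (hhol : ∀ x : Ho, DifferentiableOn ℂ (vo x) {μ : ℂ | 0 < μ.re})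
    (hdecay : ∀ (x : Ho) (μ : ℂ), 0 < μ.re →
      ‖vo x μ‖ ≤ ‖x‖ / Real.sqrt (2 * μ.re))
    (α : ℂ) (hα : 0 < α.re) (x : Ho) :
    ∃ z w : Ho, ∃ y : Y,
      (∀ μ : ℂ, 0 < μ.re → μ ≠ α →
        vo z μ = (α - μ)⁻¹ • (vo x μ - vo x α)) ∧
      (∀ μ : ℂ, 0 < μ.re → vo w μ = μ • vo z μ - y) ∧
      Tendsto (fun η : ℂ => η • vo z η) (comap Complex.re atTop) (nhds y) ∧
      α • z - w = x ∧
      y = vo x α := by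
  obtain ⟨z, hz⟩ := dbr_exists_z φ vo ko hrep hker α hα x
  refine ⟨z, α • z - x, vo x α, hz, ?_, ?_, by rw [sub_sub_cancel], rfl⟩
  · -- the domain condition
    intro μ hμ
    have hw : vo (α • z - x) μ = α • vo z μ - vo x μ := by
      rw [map_sub, map_smul]
      rfl
    rw [hw]
    by_cases hne : μ = α
    · subst hne
      rfl
    · have hδ : α - μ ≠ 0 := sub_ne_zero.mpr (Ne.symm hne)
      rw [hz μ hμ hne, smul_smul, smul_smul, sub_eq_sub_iff_sub_eq_sub, ← sub_smul]
      have h1 : α * (α - μ)⁻¹ - μ * (α - μ)⁻¹ = 1 := by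
        field_simp
      rw [h1, one_smul]
  · -- the limit condition
    have hT : Tendsto Complex.re (comap Complex.re atTop) atTop := tendsto_comap
    set B : ℝ → ℝ := fun t => 2 * (‖x‖ / Real.sqrt (2 * t))
        + ‖α‖ / (t - α.re) * ‖vo x α‖ with hBdef
    have hB : Tendsto B atTop (nhds 0) := by
      have h1 : Tendsto (fun t : ℝ => ‖x‖ / Real.sqrt (2 * t)) atTop (nhds 0) :=
        tendsto_const_nhds.div_atTop dbr_sqrt_atTop
      have h2 : Tendsto (fun t : ℝ => ‖α‖ / (t - α.re)) atTop (nhds 0) :=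
        tendsto_const_nhds.div_atTop (tendsto_atTop_add_const_right _ _ tendsto_id)
      have h3 := (h1.const_mul 2).add (h2.mul_const ‖vo x α‖)
      have h4 : (2:ℝ) * 0 + 0 * ‖vo x α‖ = 0 := by ring
      rw [hBdef, ← h4]
      exact h3
    have hEv : ∀ᶠ η in comap Complex.re atTop,
        ‖η • vo z η - vo x α‖ ≤ B η.re := by
      filter_upwards [hT.eventually
        (eventually_gt_atTop (max (2 * ‖α‖ + 1) (α.re + 1)))] with η hη
      obtain ⟨hη1, hη2⟩ := max_lt_iff.mp hη
      have habsα : (0:ℝ) ≤ ‖α‖ := norm_nonneg α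
      have hηre : (0:ℝ) < η.re := by linarith
      have hne : η ≠ α := by
        intro h
        rw [h] at hη2
        linarith
      have hδ : α - η ≠ 0 := sub_ne_zero.mpr (Ne.symm hne)
      -- decompose
      rw [hz η hηre hne]
      have hdec : η • ((α - η)⁻¹ • (vo x η - vo x α)) - vo x α
          = (η * (α - η)⁻¹) • vo x η - (η * (α - η)⁻¹ + 1) • vo x α := by
        rw [smul_smul, add_smul, one_smul, smul_sub]
        abel
      rw [hdec]
      -- bounds on scalars
      have hreη : η.re ≤ ‖η‖ := Complex.re_le_norm η
      have htri : ‖η‖ ≤ ‖α - η‖ + ‖α‖ := by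
        have h := norm_add_le (η - α) α
        rw [sub_add_cancel] at h
        rw [norm_sub_rev α η]
        exact h
      have hαlt : ‖α‖ ≤ ‖η‖ / 2 := by nlinarith
      have hden2 : ‖η‖ / 2 ≤ ‖α - η‖ := by nlinarith
      have hdenpos : (0:ℝ) < ‖α - η‖ := by nlinarith
      have hb1 : ‖η * (α - η)⁻¹‖ ≤ 2 := by
        rw [norm_mul, norm_inv, ← div_eq_mul_inv, div_le_iff₀ hdenpos]
        nlinarith
      have hb2 : ‖η * (α - η)⁻¹ + 1‖ ≤ ‖α‖ / (η.re - α.re) := by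
        have heq : η * (α - η)⁻¹ + 1 = α * (α - η)⁻¹ := by
          field_simp
          ring
        rw [heq, norm_mul, norm_inv, ← div_eq_mul_inv]
        have hre2 : η.re - α.re ≤ ‖α - η‖ := by
          have h := Complex.abs_re_le_norm (α - η)
          rw [Complex.sub_re] at h
          calc η.re - α.re ≤ |α.re - η.re| := by
                rw [abs_sub_comm]
                exact le_abs_self _
            _ ≤ ‖α - η‖ := h
        have hpos2 : (0:ℝ) < η.re - α.re := by linarith
        exact div_le_div_of_nonneg_left habsα hpos2 hre2
      -- assemble
      calc ‖(η * (α - η)⁻¹) • vo x η - (η * (α - η)⁻¹ + 1) • vo x α‖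
          ≤ ‖(η * (α - η)⁻¹) • vo x η‖ + ‖(η * (α - η)⁻¹ + 1) • vo x α‖ :=
            norm_sub_le _ _
        _ = ‖η * (α - η)⁻¹‖ * ‖vo x η‖
            + ‖η * (α - η)⁻¹ + 1‖ * ‖vo x α‖ := by
            rw [norm_smul, norm_smul]
        _ ≤ 2 * (‖x‖ / Real.sqrt (2 * η.re))
            + ‖α‖ / (η.re - α.re) * ‖vo x α‖ := by
            have hd := hdecay x η hηre
            have hvoxη : (0:ℝ) ≤ ‖vo x η‖ := norm_nonneg _
            have hvoxα : (0:ℝ) ≤ ‖vo x α‖ := norm_nonneg _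
            have habs1 : (0:ℝ) ≤ ‖η * (α - η)⁻¹‖ := norm_nonneg _
            gcongr
        _ = B η.re := rfl
    have h0 := squeeze_zero_norm' hEv (hB.comp hT)
    exact tendsto_sub_nhds_zero_iff.mp h0
end

section
/- Let T : H¹ → H² be a bounded operator between Hilbert spaces with ‖T‖ ≤ 1 such that both columns of the 2×2 block structure are isometric in the following sense: suppose T = [A B; C D] : X ⊕ U → X ⊕ Y is a contraction such that [A; C] : X → X ⊕ Y and [B; D] : U → X ⊕ Y are both isometries. Then T itself is an isometry from X ⊕ U to X ⊕ Y. -/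
open RCLike
open scoped InnerProductSpace

/-- **A contraction with isometric columns is an isometry.**
If `T = [A B; C D] : X ⊕ U → X ⊕ Y` is contractive and both columns
`[A; C] : X → X ⊕ Y` and `[B; D] : U → X ⊕ Y` are isometric, then `T` is an
isometry: equality holds in the contraction inequality for all `x, u`. -/
theorem contraction_isometric_columns_isometry
    {X U Y : Type*}
    [NormedAddCommGroup X] [InnerProductSpace ℂ X]
    [NormedAddCommGroup U] [InnerProductSpace ℂ U]
    [NormedAddCommGroup Y] [InnerProductSpace ℂ Y]
    (A : X →L[ℂ] X) (B : U →L[ℂ] X) (C : X →L[ℂ] Y) (D : U →L[ℂ] Y)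
    (hcol1 : ∀ x : X, ‖A x‖ ^ 2 + ‖C x‖ ^ 2 = ‖x‖ ^ 2)
    (hcol2 : ∀ u : U, ‖B u‖ ^ 2 + ‖D u‖ ^ 2 = ‖u‖ ^ 2)
    (hcontr : ∀ (x : X) (u : U),
      ‖A x + B u‖ ^ 2 + ‖C x + D u‖ ^ 2 ≤ ‖x‖ ^ 2 + ‖u‖ ^ 2) :
    ∀ (x : X) (u : U),
      ‖A x + B u‖ ^ 2 + ‖C x + D u‖ ^ 2 = ‖x‖ ^ 2 + ‖u‖ ^ 2 := by
  have key : ∀ (x : X) (u : U),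
      re (⟪A x, B u⟫_ℂ) + re (⟪C x, D u⟫_ℂ) ≤ 0 := by
    intro x u
    have h := hcontr x u
    rw [norm_add_sq (𝕜 := ℂ), norm_add_sq (𝕜 := ℂ)] at h
    have h1 := hcol1 x
    have h2 := hcol2 u
    nlinarith
  intro x u
  have h1 := key x u
  have h2 := key x (-u)
  simp only [map_neg, inner_neg_right, map_neg] at h2
  have hz : re (⟪A x, B u⟫_ℂ) + re (⟪C x, D u⟫_ℂ) = 0 := by linarith
  rw [norm_add_sq (𝕜 := ℂ), norm_add_sq (𝕜 := ℂ)]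
  have := hcol1 x
  have := hcol2 u
  nlinarith
end
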